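/- If m = (a+b)/2 (with a+b even), then the survival function of DTSP(a,m,b,n) at m equals 1/2; i.e., m is the median of the distribution regardless of n > 0. -/

import Mathlib

open Finset

/-- The pmf of the discrete two-sided power distribution DTSP(a, m, b, n). -/
noncomputable def dtspPmf (a m b : ℤ) (n : ℝ) (y : ℤ) : ℝ :=
  if y < m then
    (((y - a + 1 : ℤ) : ℝ) ^ n - ((y - a : ℤ) : ℝ) ^ n) /
      (((b - a : ℤ) : ℝ) * ((m - a : ℤ) : ℝ) ^ (n - 1))
  else
    (((b - y : ℤ) : ℝ) ^ n - ((b - y - 1 : ℤ) : ℝ) ^ n) /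
      (((b - a : ℤ) : ℝ) * ((b - m : ℤ) : ℝ) ^ (n - 1))

lemma telescope_int (g : ℤ → ℝ) (m : ℤ) :
    ∀ k : ℕ, ∑ t ∈ Finset.Icc m (m + k), (g t - g (t + 1)) = g m - g (m + k + 1) := by
  intro k
  induction k with
  | zero => simp
  | succ k ih =>
    have h1 : Finset.Icc m (m + ((k : ℕ) + 1 : ℕ)) = insert (m + k + 1) (Finset.Icc m (m + k)) := by
      ext x; simp only [Finset.mem_Icc, Finset.mem_insert]; push_cast; omega
    have h2 : (m + (k : ℤ) + 1) ∉ Finset.Icc m (m + (k : ℤ)) := by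
      simp [Finset.mem_Icc]
    rw [h1, Finset.sum_insert h2, ih]
    push_cast
    ring

/-- If m = (a+b)/2, then m is the median of DTSP(a,m,b,n): S(m) = 1/2 regardless of n. -/
theorem dtsp_median (a m b : ℤ) (n : ℝ)
    (ham : a < m) (hmb : m < b) (hn : 0 < n) (hmed : 2 * m = a + b) :
    ∑ t ∈ Finset.Icc m (b - 1), dtspPmf a m b n t = 1 / 2 := by
  set C : ℝ := ((b - a : ℤ) : ℝ) * ((b - m : ℤ) : ℝ) ^ (n - 1) with hC
  set g : ℤ → ℝ := fun t => ((b - t : ℤ) : ℝ) ^ n with hg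
  have hstep : ∀ t ∈ Finset.Icc m (b - 1), dtspPmf a m b n t = (g t - g (t + 1)) / C := by
    intro t ht
    simp only [Finset.mem_Icc] at ht
    have : ¬ t < m := by omega
    simp only [dtspPmf, this, if_false, hg, hC]
    have : b - (t + 1) = b - t - 1 := by ring
    rw [this]
  rw [Finset.sum_congr rfl hstep]
  have hsum : ∑ t ∈ Finset.Icc m (b - 1), (g t - g (t + 1)) / C
      = (∑ t ∈ Finset.Icc m (b - 1), (g t - g (t + 1))) / C := by
    rw [Finset.sum_div]
  rw [hsum]
  obtain ⟨k, hk⟩ : ∃ k : ℕ, b - 1 = m + k := ⟨(b - 1 - m).toNat, by omega⟩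
  rw [hk, telescope_int]
  have hgm : g m = ((b - m : ℤ) : ℝ) ^ n := rfl
  have hgb : g (m + k + 1) = 0 := by
    have : m + (k : ℤ) + 1 = b := by omega
    simp [hg, this, Real.zero_rpow hn.ne']
  rw [hgm, hgb, sub_zero]
  have hbm : (0 : ℝ) < ((b - m : ℤ) : ℝ) := by exact_mod_cast by omega
  have hba : ((b - a : ℤ) : ℝ) = 2 * ((b - m : ℤ) : ℝ) := by
    have h : b - a = 2 * (b - m) := by omega
    exact_mod_cast h
  have hrp : ((b - m : ℤ) : ℝ) ^ n = ((b - m : ℤ) : ℝ) ^ (n - 1) * ((b - m : ℤ) : ℝ) := by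
    rw [← Real.rpow_add_one hbm.ne', sub_add_cancel]
  have hpow : (0 : ℝ) < ((b - m : ℤ) : ℝ) ^ (n - 1) := Real.rpow_pos_of_pos hbm _
  rw [hC, hba, hrp]
  have hne : 2 * ((b - m : ℤ) : ℝ) * ((b - m : ℤ) : ℝ) ^ (n - 1) ≠ 0 := by positivity
  rw [div_eq_div_iff hne two_ne_zero]
  ring
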